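/- Under the no-arbitrage assumption, the set C := {⟨y, g⟩ − π(y) : y ∈ ℝᵐ} − L⁰₊ of payoffs super-replicable at zero cost is closed under pointwise limits: if fₙ ∈ C for all n and fₙ → f pointwise on Ω, then f ∈ C. -/

import Mathlib

open MeasureTheory Filter

noncomputable def priceFn {m : ℕ} (pilo pihi : Fin m → ℝ) (y : Fin m → ℝ) : ℝ :=
  ∑ j, (max (y j) 0 * pihi j - max (-(y j)) 0 * pilo j)

private lemma max_split (a b : ℝ) (ha : 0 ≤ a) (hb : 0 ≤ b) :
    max (a - b) 0 = a - min a b ∧ max (-(a - b)) 0 = b - min a b := by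
  rcases le_total a b with h | h
  · rw [max_eq_right (by linarith), max_eq_left (by linarith), min_eq_left h]
    constructor <;> ring
  · rw [max_eq_left (by linarith), max_eq_right (by linarith), min_eq_right h]
    constructor <;> ring

/-- The key closedness lemma for finitely generated cones of functions minus
nonnegative functions, under a no-arbitrage condition. -/
private lemma key_lemma {Ω : Type*} {ι : Type*} [Fintype ι] (G : ι → Ω → ℝ)
    (hNA : ∀ c : ι → ℝ, (∀ k, 0 ≤ c k) → (∀ ω, 0 ≤ ∑ k, c k * G k ω) →
      ∀ ω, ∑ k, c k * G k ω = 0) :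
    ∀ (N : ℕ) (S : Finset ι), S.card ≤ N → ∀ (fseq : ℕ → Ω → ℝ) (f : Ω → ℝ),
    (∀ n, ∃ c : ι → ℝ, (∀ k, 0 ≤ c k) ∧ (∀ k ∉ S, c k = 0) ∧
       ∀ ω, fseq n ω ≤ ∑ k, c k * G k ω) →
    (∀ ω, Tendsto (fun n => fseq n ω) atTop (nhds (f ω))) →
    ∃ c : ι → ℝ, (∀ k, 0 ≤ c k) ∧ ∀ ω, f ω ≤ ∑ k, c k * G k ω := by
  classical
  intro N
  induction N with
  | zero =>
    intro S hS fseq f hmem hlim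
    have hSempty : S = ∅ := Finset.card_eq_zero.mp (Nat.le_zero.mp hS)
    refine ⟨0, fun k => le_refl 0, fun ω => ?_⟩
    have h0 : ∀ n, fseq n ω ≤ 0 := by
      intro n
      obtain ⟨c, hc0, hcS, hcle⟩ := hmem n
      have : ∀ k, c k = 0 := fun k => hcS k (by simp [hSempty])
      simpa [this] using hcle ω
    have : f ω ≤ 0 := le_of_tendsto_of_tendsto' (hlim ω) tendsto_const_nhds h0
    simpa using this
  | succ N ih =>
    intro S hS fseq f hmem hlim
    choose c hc0 hcS hcle using hmem
    by_cases hb : ∃ M : ℝ, ∃ᶠ n in atTop, ‖c n‖ ≤ M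
    · -- bounded case
      obtain ⟨M, hM⟩ := hb
      obtain ⟨φ, hφ, hφM⟩ := Filter.extraction_of_frequently_atTop hM
      obtain ⟨cl, _, ψ, hψ, hψt⟩ :=
        (isCompact_closedBall (0 : ι → ℝ) M).tendsto_subseq
          (x := fun n => c (φ n))
          (fun n => by simpa [Metric.mem_closedBall, dist_zero_right] using hφM n)
      refine ⟨cl, ?_, ?_⟩
      · intro k
        exact le_of_tendsto_of_tendsto' tendsto_const_nhds
          (tendsto_pi_nhds.mp hψt k) (fun n => hc0 _ k)
      · intro ω
        have h1 : Tendsto (fun n => fseq (φ (ψ n)) ω) atTop (nhds (f ω)) :=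
          (hlim ω).comp ((hφ.comp hψ).tendsto_atTop)
        have h2 : Tendsto (fun n => ∑ k, c (φ (ψ n)) k * G k ω) atTop
            (nhds (∑ k, cl k * G k ω)) := by
          apply tendsto_finset_sum
          intro k _
          exact (tendsto_pi_nhds.mp hψt k).mul_const _
        exact le_of_tendsto_of_tendsto' h1 h2 (fun n => hcle _ ω)
    · -- unbounded case
      push_neg at hb
      have htop : Tendsto (fun n => ‖c n‖) atTop atTop := by
        rw [tendsto_atTop]
        intro M
        filter_upwards [hb M] with n hn
        exact hn.le
      set d : ℕ → ι → ℝ := fun n => ‖c n‖⁻¹ • c n with hd_def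
      have hdnorm : ∀ n, ‖d n‖ = ‖c n‖⁻¹ * ‖c n‖ := by
        intro n
        rw [hd_def, norm_smul, norm_inv, norm_norm]
      have hd1 : ∀ n, ‖d n‖ ≤ 1 := by
        intro n
        rcases eq_or_ne ‖c n‖ 0 with h | h
        · simp [hdnorm n, h]
        · rw [hdnorm n, inv_mul_cancel₀ h]
      obtain ⟨cl, _, φ, hφ, hφt⟩ :=
        (isCompact_closedBall (0 : ι → ℝ) 1).tendsto_subseq (x := d)
          (fun n => by simpa [Metric.mem_closedBall, dist_zero_right] using hd1 n)
      have hdk : ∀ n k, d n k = ‖c n‖⁻¹ * c n k := by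
        intro n k; rw [hd_def]; simp
      have hcl0 : ∀ k, 0 ≤ cl k := by
        intro k
        refine le_of_tendsto_of_tendsto' tendsto_const_nhds
          (tendsto_pi_nhds.mp hφt k) (fun n => ?_)
        rw [Function.comp_apply, hdk]
        exact mul_nonneg (inv_nonneg.mpr (norm_nonneg _)) (hc0 _ k)
      have hclS : ∀ k ∉ S, cl k = 0 := by
        intro k hk
        have h1 : Tendsto (fun n => d (φ n) k) atTop (nhds (cl k)) :=
          tendsto_pi_nhds.mp hφt k
        have h2 : ∀ n, d (φ n) k = 0 := by
          intro n; rw [hdk, hcS _ k hk, mul_zero]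
        exact tendsto_nhds_unique h1 (by simpa [h2] using (tendsto_const_nhds : Tendsto (fun _ : ℕ => (0:ℝ)) atTop _))
      have hev : ∀ᶠ n in atTop, (1:ℝ) ≤ ‖c n‖ := htop.eventually_ge_atTop 1
      have hnorm1 : ‖cl‖ = 1 := by
        have h1 : Tendsto (fun n => ‖d (φ n)‖) atTop (nhds ‖cl‖) :=
          (continuous_norm.tendsto cl).comp hφt
        have h2 : ∀ᶠ n in atTop, ‖d (φ n)‖ = 1 := by
          filter_upwards [hφ.tendsto_atTop.eventually hev] with n hn
          rw [hdnorm, inv_mul_cancel₀ (by linarith)]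
        exact tendsto_nhds_unique h1
          (Tendsto.congr' (by filter_upwards [h2] with n hn using hn.symm) tendsto_const_nhds)
      have hpos : ∀ ω, 0 ≤ ∑ k, cl k * G k ω := by
        intro ω
        have ha : Tendsto (fun n => ‖c (φ n)‖⁻¹ * fseq (φ n) ω) atTop (nhds 0) := by
          have h1 : Tendsto (fun n => ‖c (φ n)‖⁻¹) atTop (nhds 0) :=
            tendsto_inv_atTop_zero.comp (htop.comp hφ.tendsto_atTop)
          have h2 : Tendsto (fun n => fseq (φ n) ω) atTop (nhds (f ω)) :=
            (hlim ω).comp hφ.tendsto_atTop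
          simpa using h1.mul h2
        have hbb : Tendsto (fun n => ∑ k, d (φ n) k * G k ω) atTop
            (nhds (∑ k, cl k * G k ω)) := by
          apply tendsto_finset_sum
          intro k _
          exact (tendsto_pi_nhds.mp hφt k).mul_const _
        refine le_of_tendsto_of_tendsto ha hbb ?_
        filter_upwards [hφ.tendsto_atTop.eventually hev] with n hn
        have hn0 : (0:ℝ) ≤ ‖c (φ n)‖⁻¹ := inv_nonneg.mpr (norm_nonneg _)
        calc ‖c (φ n)‖⁻¹ * fseq (φ n) ω
            ≤ ‖c (φ n)‖⁻¹ * ∑ k, c (φ n) k * G k ω :=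
              mul_le_mul_of_nonneg_left (hcle _ ω) hn0
          _ = ∑ k, d (φ n) k * G k ω := by
              rw [Finset.mul_sum]
              exact Finset.sum_congr rfl (fun k _ => by rw [hdk]; ring)
      have hzero : ∀ ω, ∑ k, cl k * G k ω = 0 := hNA cl hcl0 hpos
      -- choose reduction direction
      set T : Finset ι := Finset.univ.filter (fun k => 0 < cl k) with hT_def
      have hTne : T.Nonempty := by
        by_contra h
        rw [Finset.not_nonempty_iff_eq_empty] at h
        have : cl = 0 := by
          funext k
          show cl k = 0
          have hk : k ∉ T := by rw [h]; exact Finset.notMem_empty k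
          have : ¬ 0 < cl k := by
            intro hlt
            exact hk (by rw [hT_def]; exact Finset.mem_filter.mpr ⟨Finset.mem_univ k, hlt⟩)
          linarith [hcl0 k, not_lt.mp this]
        rw [this] at hnorm1
        simp at hnorm1
      set t : ℕ → ℝ := fun n => T.inf' hTne (fun k => c (φ n) k / cl k) with ht_def
      have hκ : ∀ n, ∃ k ∈ T, t n = c (φ n) k / cl k := by
        intro n
        obtain ⟨k, hkT, hk⟩ := Finset.exists_mem_eq_inf' hTne (fun k => c (φ n) k / cl k)
        exact ⟨k, hkT, hk⟩
      choose κ hκT hκeq using hκ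
      obtain ⟨k₁, hk₁fib⟩ := Finite.exists_infinite_fiber κ
      have hfreq : ∃ᶠ n in atTop, κ n = k₁ := by
        rw [Nat.frequently_atTop_iff_infinite]
        have := Set.infinite_coe_iff.mp hk₁fib
        convert this using 1
        ext n; simp
      obtain ⟨ψ, hψ, hψk⟩ := Filter.extraction_of_frequently_atTop hfreq
      have hk₁T : k₁ ∈ T := by
        have := hκT (ψ 0)
        rwa [hψk 0] at this
      have hclk₁ : 0 < cl k₁ := (Finset.mem_filter.mp hk₁T).2
      have hk₁S : k₁ ∈ S := by
        by_contra h
        rw [hclS k₁ h] at hclk₁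
        exact lt_irrefl 0 hclk₁
      have hcard : (S.erase k₁).card ≤ N := by
        rw [Finset.card_erase_of_mem hk₁S]
        omega
      refine ih (S.erase k₁) hcard (fun n => fseq (φ (ψ n))) f ?_
        (fun ω => (hlim ω).comp ((hφ.comp hψ).tendsto_atTop))
      intro n
      refine ⟨fun k => c (φ (ψ n)) k - t (ψ n) * cl k, ?_, ?_, ?_⟩
      · intro k
        by_cases hk : k ∈ T
        · have hclk : 0 < cl k := (Finset.mem_filter.mp hk).2
          have hle : t (ψ n) ≤ c (φ (ψ n)) k / cl k := Finset.inf'_le _ hk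
          have := mul_le_mul_of_nonneg_right hle hclk.le
          rw [div_mul_cancel₀ _ (ne_of_gt hclk)] at this
          show 0 ≤ c (φ (ψ n)) k - t (ψ n) * cl k
          linarith
        · have hclk : cl k = 0 := by
            have : ¬ 0 < cl k := by
              intro hlt
              exact hk (by rw [hT_def]; exact Finset.mem_filter.mpr ⟨Finset.mem_univ k, hlt⟩)
            linarith [hcl0 k, not_lt.mp this]
          simp only [hclk, mul_zero, sub_zero]
          exact hc0 _ k
      · intro k hk
        show c (φ (ψ n)) k - t (ψ n) * cl k = 0
        rw [Finset.mem_erase] at hk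
        push_neg at hk
        by_cases hkk₁ : k = k₁
        · subst hkk₁
          have ht : t (ψ n) = c (φ (ψ n)) k / cl k := by
            have := hκeq (ψ n)
            rwa [hψk n] at this
          rw [ht, div_mul_cancel₀ _ (ne_of_gt hclk₁), sub_self]
        · have hkS : k ∉ S := hk hkk₁
          rw [hcS _ k hkS, hclS k hkS, mul_zero, sub_zero]
      · intro ω
        have hsum : ∑ k, (c (φ (ψ n)) k - t (ψ n) * cl k) * G k ω
            = ∑ k, c (φ (ψ n)) k * G k ω - t (ψ n) * ∑ k, cl k * G k ω := by
          rw [Finset.mul_sum, ← Finset.sum_sub_distrib]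
          exact Finset.sum_congr rfl (fun k _ => by ring)
        rw [hsum, hzero ω, mul_zero, sub_zero]
        exact hcle _ ω

/-- Under the no-arbitrage assumption, the set C of payoffs super-replicable at zero
cost is closed under pointwise limits. -/
theorem stmt14 {Ω : Type*} [TopologicalSpace Ω] [PolishSpace Ω]
    [MeasurableSpace Ω] [BorelSpace Ω]
    (m : ℕ) (g : Fin m → Ω → ℝ) (hg : ∀ j, Measurable (g j))
    (pilo pihi : Fin m → ℝ) (hple : ∀ j, pilo j ≤ pihi j)
    (hNA : ∀ y : Fin m → ℝ,
      (∀ ω, 0 ≤ (∑ j, y j * g j ω) - priceFn pilo pihi y) →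
      (∀ ω, (∑ j, y j * g j ω) - priceFn pilo pihi y = 0))
    (fseq : ℕ → Ω → ℝ) (f : Ω → ℝ)
    (hmem : ∀ n, ∃ y : Fin m → ℝ, ∀ ω,
      fseq n ω ≤ (∑ j, y j * g j ω) - priceFn pilo pihi y)
    (hlim : ∀ ω, Tendsto (fun n => fseq n ω) atTop (nhds (f ω))) :
    ∃ y : Fin m → ℝ, ∀ ω,
      f ω ≤ (∑ j, y j * g j ω) - priceFn pilo pihi y := by
  classical
  set G : (Fin m ⊕ Fin m) → Ω → ℝ :=
    Sum.elim (fun j ω => g j ω - pihi j) (fun j ω => pilo j - g j ω) with hG_def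
  -- key identity: for c ≥ 0, with y j = c (inl j) - c (inr j),
  -- ⟨y,g⟩ - π(y) = ∑ c G + D where D ≥ 0.
  have hident : ∀ (c : (Fin m ⊕ Fin m) → ℝ), (∀ k, 0 ≤ c k) → ∀ ω,
      (∑ j, (c (.inl j) - c (.inr j)) * g j ω)
        - priceFn pilo pihi (fun j => c (.inl j) - c (.inr j))
      = (∑ k, c k * G k ω)
        + ∑ j, min (c (.inl j)) (c (.inr j)) * (pihi j - pilo j) := by
    intro c hc ω
    rw [hG_def, Fintype.sum_sum_type]
    simp only [Sum.elim_inl, Sum.elim_inr, priceFn]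
    rw [← Finset.sum_sub_distrib, ← Finset.sum_add_distrib, ← Finset.sum_add_distrib]
    refine Finset.sum_congr rfl (fun j _ => ?_)
    obtain ⟨h1, h2⟩ := max_split (c (.inl j)) (c (.inr j)) (hc _) (hc _)
    rw [h1, h2]
    ring
  have hD : ∀ (c : (Fin m ⊕ Fin m) → ℝ), (∀ k, 0 ≤ c k) →
      0 ≤ ∑ j, min (c (.inl j)) (c (.inr j)) * (pihi j - pilo j) := by
    intro c hc
    apply Finset.sum_nonneg
    intro j _
    exact mul_nonneg (le_min (hc _) (hc _)) (by linarith [hple j])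
  -- transferred no-arbitrage
  have hNA' : ∀ c : (Fin m ⊕ Fin m) → ℝ, (∀ k, 0 ≤ c k) →
      (∀ ω, 0 ≤ ∑ k, c k * G k ω) → ∀ ω, ∑ k, c k * G k ω = 0 := by
    intro c hc hpos ω
    set y : Fin m → ℝ := fun j => c (.inl j) - c (.inr j) with hy_def
    have hyNA : ∀ ω', 0 ≤ (∑ j, y j * g j ω') - priceFn pilo pihi y := by
      intro ω'
      rw [hy_def, hident c hc ω']
      have := hD c hc
      linarith [hpos ω']
    have hyeq := hNA y hyNA ω
    rw [hy_def, hident c hc ω] at hyeq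
    have h1 := hD c hc
    have h2 := hpos ω
    linarith
  -- transferred membership
  have hmem' : ∀ n, ∃ c : (Fin m ⊕ Fin m) → ℝ, (∀ k, 0 ≤ c k) ∧
      (∀ k ∉ (Finset.univ : Finset (Fin m ⊕ Fin m)), c k = 0) ∧
      ∀ ω, fseq n ω ≤ ∑ k, c k * G k ω := by
    intro n
    obtain ⟨y, hy⟩ := hmem n
    refine ⟨Sum.elim (fun j => max (y j) 0) (fun j => max (-(y j)) 0), ?_, ?_, ?_⟩
    · rintro (j | j) <;> exact le_max_right _ _
    · intro k hk
      exact absurd (Finset.mem_univ k) hk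
    · intro ω
      set c : (Fin m ⊕ Fin m) → ℝ :=
        Sum.elim (fun j => max (y j) 0) (fun j => max (-(y j)) 0) with hc_def
      have hc : ∀ k, 0 ≤ c k := by rintro (j | j) <;> exact le_max_right _ _
      have hy' : ∀ j, c (.inl j) - c (.inr j) = y j := by
        intro j
        rw [hc_def]
        simp only [Sum.elim_inl, Sum.elim_inr]
        rcases le_total (y j) 0 with h | h
        · rw [max_eq_right h, max_eq_left (by linarith)]; ring
        · rw [max_eq_left h, max_eq_right (by linarith)]; ring
      have hDzero : ∀ j, min (c (.inl j)) (c (.inr j)) = 0 := by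
        intro j
        rw [hc_def]
        simp only [Sum.elim_inl, Sum.elim_inr]
        rcases le_total (y j) 0 with h | h
        · rw [max_eq_right h]
          exact min_eq_left (le_max_right _ _)
        · rw [max_eq_right (by linarith : -(y j) ≤ 0)]
          exact min_eq_right (le_max_right _ _)
      have := hident c hc ω
      simp only [hy'] at this
      have hDz : ∑ j, min (c (.inl j)) (c (.inr j)) * (pihi j - pilo j) = 0 := by
        apply Finset.sum_eq_zero
        intro j _
        rw [hDzero j, zero_mul]
      rw [hDz, add_zero] at this
      calc fseq n ω ≤ (∑ j, y j * g j ω) - priceFn pilo pihi y := hy ω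
        _ = ∑ k, c k * G k ω := by
            rw [← this]
  obtain ⟨c, hc0, hcle⟩ := key_lemma G hNA' (Finset.univ.card)
    Finset.univ le_rfl fseq f hmem' hlim
  refine ⟨fun j => c (.inl j) - c (.inr j), fun ω => ?_⟩
  rw [hident c hc0 ω]
  have := hD c hc0
  linarith [hcle ω]
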